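/- Let A be an n×m genotype matrix such that for every pair of columns i, j we have {01,10,11} ⊄ ind^A(i,j) and no resolution graph G_i contains a cycle of odd total weight. Then there exists a 2n×m haplotype matrix B explaining A that satisfies the three gamete property; moreover, B can be chosen so that for each row g ∈ A_i and each column j with g[j] = 2, the first explaining haplotype h of g has h[j] = 0 if column j is connected to column i by an even-weight path in a fixed connected supergraph G_i' of G_i (obtained by joining one vertex of each connected component of G_i not containing i to i by an edge of weight 0) and h[j] = 1 otherwise. -/

import Mathlib

/-- A pair of haplotypes `h`, `h'` explains a genotype `g`:
entries `0`/`1` are copied, and at `2`-entries the haplotypes differ. -/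
def ExplainsRow {m : ℕ} (h h' : Fin m → Bool) (g : Fin m → Fin 3) : Prop :=
  ∀ j : Fin m,
    (g j = 0 → h j = false ∧ h' j = false) ∧
    (g j = 1 → h j = true ∧ h' j = true) ∧
    (g j = 2 → h j ≠ h' j)

/-- A `2n × m` haplotype matrix, given by its odd rows `B₁` and even rows `B₂`,
explains an `n × m` genotype matrix `A`. -/
def Explains {n m : ℕ} (B₁ B₂ : Fin n → Fin m → Bool) (A : Fin n → Fin m → Fin 3) : Prop :=
  ∀ r : Fin n, ExplainsRow (B₁ r) (B₂ r) (A r)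

/-- The induced set `ind^B(i,j)` of a haplotype matrix: all pairs `xy` appearing
in columns `i` and `j` in some row of `B`. -/
def indB {n m : ℕ} (B₁ B₂ : Fin n → Fin m → Bool) (i j : Fin m) : Set (Bool × Bool) :=
  {p | ∃ r : Fin n, (B₁ r i = p.1 ∧ B₁ r j = p.2) ∨ (B₂ r i = p.1 ∧ B₂ r j = p.2)}

/-- The three gamete property: `{01,10,11}` is never a subset of an induced set. -/
def ThreeGamete {n m : ℕ} (B₁ B₂ : Fin n → Fin m → Bool) : Prop :=
  ∀ i j : Fin m,
    ¬ (({(false, true), (true, false), (true, true)} : Set (Bool × Bool)) ⊆ indB B₁ B₂ i j)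

/-- The four gamete property: no induced set equals `{00,01,10,11}`. -/
def FourGamete {n m : ℕ} (B₁ B₂ : Fin n → Fin m → Bool) : Prop :=
  ∀ i j : Fin m,
    indB B₁ B₂ i j ≠
      ({(false, false), (false, true), (true, false), (true, true)} : Set (Bool × Bool))

/-- A genotype matrix admits a directed perfect phylogeny if some explaining
haplotype matrix satisfies the three gamete property. -/
def AdmitsDirectedPP {n m : ℕ} (A : Fin n → Fin m → Fin 3) : Prop :=
  ∃ B₁ B₂ : Fin n → Fin m → Bool, Explains B₁ B₂ A ∧ ThreeGamete B₁ B₂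

/-- A genotype matrix admits a perfect phylogeny if some explaining
haplotype matrix satisfies the four gamete property. -/
def AdmitsPP {n m : ℕ} (A : Fin n → Fin m → Fin 3) : Prop :=
  ∃ B₁ B₂ : Fin n → Fin m → Bool, Explains B₁ B₂ A ∧ FourGamete B₁ B₂

/-- Encode a haplotype entry as a genotype entry. -/
def boolToFin3 (b : Bool) : Fin 3 := if b then 1 else 0

/-- The induced set `ind^A(i,j)` of a genotype matrix. -/
def indA {n m : ℕ} (A : Fin n → Fin m → Fin 3) (i j : Fin m) : Set (Bool × Bool) :=
  {p | ∃ r : Fin n,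
    (A r i = boolToFin3 p.1 ∧ A r j = boolToFin3 p.2) ∨
    (A r i = boolToFin3 p.1 ∧ A r j = 2) ∨
    (A r i = 2 ∧ A r j = boolToFin3 p.2)}

/-- Column `i` of `A` is greater than column `j` (written `i ≻^A j`):
`ind^A(i,j) ⊆ {00,10,11}` and the two columns are not identical. -/
def ColGreater {n m : ℕ} (A : Fin n → Fin m → Fin 3) (i j : Fin m) : Prop :=
  indA A i j ⊆ ({(false, false), (true, false), (true, true)} : Set (Bool × Bool)) ∧
  ∃ r : Fin n, A r i ≠ A r j

/-- The set `A_i`: rows `g` of `A` with `g[i] = 2` such that `i` is `≻^A`-maximal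
among the `2`-columns of `g` and has the least index among all such maximal columns. -/
def rowSet {n m : ℕ} (A : Fin n → Fin m → Fin 3) (i : Fin m) : Set (Fin n) :=
  {r | A r i = 2 ∧
    (∀ j : Fin m, j ≠ i → A r j = 2 → ¬ ColGreater A j i) ∧
    (∀ j : Fin m, j ≠ i →
      (A r j = 2 ∧ ∀ k : Fin m, k ≠ j → A r k = 2 → ¬ ColGreater A k j) → i < j)}

/-- `k` is a vertex of the resolution graph `G_i`. -/
def resVert {n m : ℕ} (A : Fin n → Fin m → Fin 3) (i k : Fin m) : Prop :=
  ∃ r ∈ rowSet A i, A r k = 2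

/-- The weighted edges of the resolution graph `G_i`: an edge `{k,l}` of weight `0`
or weight `1`, as prescribed by the construction of resolution graphs. -/
def resEdge {n m : ℕ} (A : Fin n → Fin m → Fin 3) (i : Fin m) (k l : Fin m) (w : ℕ) : Prop :=
  k ≠ l ∧ (∃ r ∈ rowSet A i, A r k = 2 ∧ A r l = 2) ∧
  ((w = 0 ∧
      (((true, true) : Bool × Bool) ∈ indA A k l ∨
        ∃ j : Fin m, j ≠ i ∧ ∃ r₂ ∈ rowSet A j, A r₂ k = 2 ∧ A r₂ l = 2)) ∨
   (w = 1 ∧ ({(false, true), (true, false)} : Set (Bool × Bool)) ⊆ indA A k l))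

/-- An edge-weighted graph, given as a relation `E u v w` ("there is an edge between
`u` and `v` of weight `w`"), contains a cycle of odd total weight: a closed sequence of
pairwise distinct vertices joined by pairwise distinct weighted edges whose weights
sum to an odd number. -/
def HasOddWeightCycle {V : Type*} (E : V → V → ℕ → Prop) : Prop :=
  ∃ (p : ℕ) (c : Fin (p + 1) → V) (w : Fin (p + 1) → ℕ),
    Function.Injective c ∧
    (∀ t : Fin (p + 1), E (c t) (c (t + 1)) (w t)) ∧
    Function.Injective (fun t : Fin (p + 1) => (Sym2.mk (c t, c (t + 1)), w t)) ∧
    Odd (∑ t, w t)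

/-- A path from `u` to `v` in an edge-weighted graph `E`: a sequence of `p + 1`
pairwise distinct vertices starting at `u` and ending at `v`, consecutive ones joined
by edges carrying the weights `w`. -/
def IsPath {V : Type*} (E : V → V → ℕ → Prop) (u v : V) (p : ℕ)
    (c : Fin (p + 1) → V) (w : Fin p → ℕ) : Prop :=
  Function.Injective c ∧ c 0 = u ∧ c (Fin.last p) = v ∧
    ∀ t : Fin p, E (c t.castSucc) (c t.succ) (w t)

/-- There is a path from `u` to `v` in the edge-weighted graph `E`. -/
def ReachableW {V : Type*} (E : V → V → ℕ → Prop) (u v : V) : Prop :=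
  ∃ (p : ℕ) (c : Fin (p + 1) → V) (w : Fin p → ℕ), IsPath E u v p c w

/-- There is a path of even total weight from `u` to `v` in the edge-weighted
graph `E`. -/
def EvenReach {V : Type*} (E : V → V → ℕ → Prop) (u v : V) : Prop :=
  ∃ (p : ℕ) (c : Fin (p + 1) → V) (w : Fin p → ℕ), IsPath E u v p c w ∧ Even (∑ t, w t)



variable {V : Type*}

inductive LWalk (E : V → V → ℕ → Prop) : V → V → Type _ where
  | nil (u : V) : LWalk E u u
  | cons {u v x : V} {w : ℕ} (e : E u v w) (q : LWalk E v x) : LWalk E u x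

namespace LWalk

variable {E F : V → V → ℕ → Prop} {u v x z : V} {w : ℕ}

def weight : ∀ {u v : V}, LWalk E u v → ℕ
  | _, _, nil _ => 0
  | _, _, @cons _ _ _ _ _ w _ q => w + q.weight

def support : ∀ {u v : V}, LWalk E u v → List V
  | u, _, nil _ => [u]
  | u, _, cons _ q => u :: q.support

@[simp] theorem weight_nil : (nil (E := E) u).weight = 0 := rfl
@[simp] theorem weight_cons (e : E u v w) (q : LWalk E v x) :
    (cons e q).weight = w + q.weight := rfl
@[simp] theorem support_nil : (nil (E := E) u).support = [u] := rfl
@[simp] theorem support_cons (e : E u v w) (q : LWalk E v x) :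
    (cons e q).support = u :: q.support := rfl

theorem support_ne_nil (P : LWalk E u v) : P.support ≠ [] := by
  cases P <;> simp

theorem support_head_tail (P : LWalk E u v) : P.support = u :: P.support.tail := by
  cases P <;> rfl

theorem start_mem_support (P : LWalk E u v) : u ∈ P.support := by
  rw [P.support_head_tail]; exact List.mem_cons_self

theorem getLast?_support (P : LWalk E u v) : P.support.getLast? = some v := by
  induction P with
  | nil => rfl
  | cons e q ih =>
    rw [support_cons, q.support_head_tail, List.getLast?_cons_cons,
      ← q.support_head_tail]
    exact ih

theorem end_mem_support (P : LWalk E u v) : v ∈ P.support :=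
  List.mem_of_mem_getLast? (by simp [P.getLast?_support])

def append : ∀ {u v x : V}, LWalk E u v → LWalk E v x → LWalk E u x
  | _, _, _, nil _, Q => Q
  | _, _, _, cons e q, Q => cons e (q.append Q)

@[simp] theorem weight_append (P : LWalk E u v) (Q : LWalk E v x) :
    (P.append Q).weight = P.weight + Q.weight := by
  induction P with
  | nil => simp [append]
  | cons e q ih => simp [append, ih]; omega

theorem support_append (P : LWalk E u v) (Q : LWalk E v x) :
    (P.append Q).support = P.support ++ Q.support.tail := by
  induction P with
  | nil u => simpa [append] using Q.support_head_tail
  | cons e q ih => simp [append, ih]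

def reverse (hs : ∀ a b w, E a b w → E b a w) :
    ∀ {u v : V}, LWalk E u v → LWalk E v u
  | _, _, nil u => nil u
  | _, _, cons e q => (q.reverse hs).append (cons (hs _ _ _ e) (nil _))

@[simp] theorem weight_reverse (hs : ∀ a b w, E a b w → E b a w) (P : LWalk E u v) :
    (P.reverse hs).weight = P.weight := by
  induction P with
  | nil => rfl
  | cons e q ih => simp [reverse, ih]; omega

@[simp] theorem support_reverse (hs : ∀ a b w, E a b w → E b a w) (P : LWalk E u v) :
    (P.reverse hs).support = P.support.reverse := by
  induction P with
  | nil => rfl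
  | cons e q ih => simp [reverse, support_append, ih]

def IsP (P : LWalk E u v) : Prop := P.support.Nodup

theorem isP_nil : (nil (E := E) u).IsP := by simp [IsP]

theorem exists_split (P : LWalk E u v) (hz : z ∈ P.support) :
    ∃ (T : LWalk E u z) (D : LWalk E z v),
      P.weight = T.weight + D.weight ∧ T.support ++ D.support.tail = P.support := by
  induction P with
  | nil u =>
    simp only [support_nil, List.mem_singleton] at hz
    subst hz
    refine ⟨nil _, nil _, ?_, ?_⟩ <;> simp
  | @cons u v' x w e q ih =>
    by_cases hu : z = u
    · subst hu
      refine ⟨nil _, cons e q, ?_, ?_⟩ <;> simp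
    · have hz' : z ∈ q.support := by
        rcases List.mem_cons.1 hz with h | h
        · exact absurd h hu
        · exact h
      obtain ⟨T, D, hw, hsupp⟩ := ih hz'
      exact ⟨cons e T, D, by simp [hw]; omega, by simp [hsupp]⟩

theorem exists_split_isP (P : LWalk E u v) (hP : P.IsP) (hz : z ∈ P.support) :
    ∃ (T : LWalk E u z) (D : LWalk E z v),
      P.weight = T.weight + D.weight ∧ T.IsP ∧ D.IsP ∧
      T.support ⊆ P.support ∧ D.support ⊆ P.support ∧
      T.support.Disjoint D.support.tail := by
  obtain ⟨T, D, hw, hsupp⟩ := P.exists_split hz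
  have hP' : (T.support ++ D.support.tail).Nodup := by rw [hsupp]; exact hP
  rw [List.nodup_append] at hP'
  obtain ⟨hT, hDt, hdisj⟩ := hP' 
  have hzT : z ∈ T.support := T.end_mem_support
  have hD : D.IsP := by
    rw [IsP, D.support_head_tail, List.nodup_cons]
    exact ⟨fun h => hdisj z hzT z h rfl, hDt⟩
  refine ⟨T, D, hw, hT, hD, ?_, ?_, fun a ha hb => hdisj a ha a hb rfl⟩
  · rw [← hsupp]; exact fun a ha => List.mem_append_left _ ha
  · rw [← hsupp, D.support_head_tail]
    intro a ha
    rcases List.mem_cons.1 ha with h | h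
    · subst h; exact List.mem_append_left _ hzT
    · exact List.mem_append_right _ h

theorem exists_path (P : LWalk E u v) :
    ∃ Q : LWalk E u v, Q.IsP ∧ Q.support ⊆ P.support := by
  induction P with
  | nil u => exact ⟨nil u, isP_nil, by simp⟩
  | @cons u v' x w e q ih =>
    obtain ⟨Q₁, hQ₁, hsub⟩ := ih
    by_cases hu : u ∈ Q₁.support
    · obtain ⟨T, D, _, _, hD, _, hDsub, _⟩ := Q₁.exists_split_isP hQ₁ hu
      exact ⟨D, hD, fun a ha => List.mem_cons_of_mem _ (hsub (hDsub ha))⟩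
    · refine ⟨cons e Q₁, ?_, ?_⟩
      · rw [IsP, support_cons, List.nodup_cons]; exact ⟨hu, hQ₁⟩
      · rw [support_cons]
        exact List.cons_subset_cons _ hsub

theorem exists_path_parity
    (hcycE : ∀ {a b : V} {wₑ : ℕ}, E a b wₑ → ∀ (T : LWalk E b a), T.IsP → Even (wₑ + T.weight))
    (P : LWalk E u v) :
    ∃ Q : LWalk E u v, Q.IsP ∧ Q.support ⊆ P.support ∧ Q.weight % 2 = P.weight % 2 := by
  induction P with
  | nil u => exact ⟨nil u, isP_nil, by simp, rfl⟩
  | @cons u v' x w e q ih =>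
    obtain ⟨Q₁, hQ₁, hsub, hpar⟩ := ih
    by_cases hu : u ∈ Q₁.support
    · obtain ⟨T, D, hw, hT, hD, _, hDsub, _⟩ := Q₁.exists_split_isP hQ₁ hu
      have hev : Even (w + T.weight) := hcycE e T hT
      refine ⟨D, hD, fun a ha => List.mem_cons_of_mem _ (hsub (hDsub ha)), ?_⟩
      obtain ⟨c, hc⟩ := hev
      simp only [weight_cons]
      omega
    · refine ⟨cons e Q₁, ?_, ?_, ?_⟩
      · rw [IsP, support_cons, List.nodup_cons]; exact ⟨hu, hQ₁⟩
      · rw [support_cons]; exact List.cons_subset_cons _ hsub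
      · simp only [weight_cons]; omega

theorem closed_even
    (hcycE : ∀ {a b : V} {wₑ : ℕ}, E a b wₑ → ∀ (T : LWalk E b a), T.IsP → Even (wₑ + T.weight))
    (C : LWalk E u u) : Even C.weight := by
  cases C with
  | nil => simp
  | @cons u v' x w e q =>
    obtain ⟨Q, hQ, _, hpar⟩ := q.exists_path_parity hcycE
    have := hcycE e Q hQ
    obtain ⟨c, hc⟩ := this
    rw [Nat.even_iff]
    simp only [weight_cons]
    omega

def Sat (F : V → V → ℕ → Prop) : ∀ {u v : V}, LWalk E u v → Prop
  | _, _, nil _ => True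
  | _, _, @cons _ _ a b _ w _ q => F a b w ∧ q.Sat F

theorem sat_of_mem (P : LWalk E u v)
    (h : ∀ a b w, E a b w → a ∈ P.support → b ∈ P.support → F a b w) : P.Sat F := by
  induction P with
  | nil => trivial
  | @cons u v' x w e q ih =>
    refine ⟨h _ _ _ e (by simp) ?_, ih ?_⟩
    · rw [support_cons]; exact List.mem_cons_of_mem _ q.start_mem_support
    · intro a b w' e' ha hb
      exact h a b w' e' (List.mem_cons_of_mem _ ha) (List.mem_cons_of_mem _ hb)

theorem exists_transfer (P : LWalk E u v) (h : P.Sat F) :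
    ∃ Q : LWalk F u v, Q.weight = P.weight ∧ Q.support = P.support := by
  induction P with
  | nil u => exact ⟨nil u, rfl, rfl⟩
  | cons e q ih =>
    obtain ⟨hf, hq⟩ := h
    obtain ⟨Q₁, h1, h2⟩ := ih hq
    exact ⟨cons hf Q₁, by simp [h1], by simp [h2]⟩

theorem exists_mono (h : ∀ a b w, E a b w → F a b w) (P : LWalk E u v) :
    ∃ Q : LWalk F u v, Q.weight = P.weight ∧ Q.support = P.support :=
  P.exists_transfer (P.sat_of_mem fun a b w e _ _ => h a b w e)

end LWalk

section Convert

theorem finmk_val {n a : ℕ} (h : a < n) : ((⟨a, h⟩ : Fin n) : ℕ) = a := rfl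

variable {V : Type*} {E : V → V → ℕ → Prop} {u v : V} {w : ℕ}

theorem LWalk.toFin (P : LWalk E u v) :
    ∃ (p : ℕ) (c : Fin (p + 1) → V) (ws : Fin p → ℕ),
      c 0 = u ∧ c (Fin.last p) = v ∧ (∀ t : Fin p, E (c t.castSucc) (c t.succ) (ws t)) ∧
      (∑ t, ws t) = P.weight ∧ List.ofFn c = P.support := by
  induction P with
  | nil u =>
    exact ⟨0, fun _ => u, fun t => t.elim0, rfl, rfl, fun t => t.elim0, by simp, by simp⟩
  | @cons u v' x w e q ih =>
    obtain ⟨p, c, ws, hc0, hcl, hedge, hsum, hofn⟩ := ih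
    refine ⟨p + 1, Fin.cons u c, Fin.cons w ws, by simp, ?_, ?_, ?_, ?_⟩
    · rw [← Fin.succ_last, Fin.cons_succ]
      exact hcl
    · intro t
      refine Fin.cases ?_ ?_ t
      · simpa [hc0] using e
      · intro s
        simp only [← Fin.succ_castSucc, Fin.cons_succ]
        exact hedge s
    · simp [Fin.sum_univ_succ, hsum]
    · rw [LWalk.support_cons, List.ofFn_succ]
      simp only [Fin.cons_zero, Fin.cons_succ]
      exact congrArg (List.cons u) hofn

theorem LWalk.ofFin : ∀ {p : ℕ} (c : Fin (p + 1) → V) (ws : Fin p → ℕ),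
    (∀ t : Fin p, E (c t.castSucc) (c t.succ) (ws t)) →
    ∀ {u v : V}, c 0 = u → c (Fin.last p) = v →
    ∃ P : LWalk E u v, P.weight = ∑ t, ws t ∧ P.support = List.ofFn c := by
  intro p
  induction p with
  | zero =>
    intro c ws _ u v h0 hl
    rw [Fin.last_zero] at hl
    subst h0; subst hl
    exact ⟨LWalk.nil _, by simp, by simp [List.ofFn_succ]⟩
  | succ p ih =>
    intro c ws he u v h0 hl
    have he' : ∀ t : Fin p, E ((c ∘ Fin.succ) t.castSucc) ((c ∘ Fin.succ) t.succ)
        ((ws ∘ Fin.succ) t) := by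
      intro t
      simp only [Function.comp_apply, Fin.succ_castSucc]
      exact he t.succ
    have hl' : (c ∘ Fin.succ) (Fin.last p) = v := by
      simp only [Function.comp_apply, Fin.succ_last]
      exact hl
    obtain ⟨P', hw', hs'⟩ := ih (c ∘ Fin.succ) (ws ∘ Fin.succ) he' rfl hl'
    have e0 : E u ((c ∘ Fin.succ) 0) (ws 0) := by
      have := he 0
      simpa [h0] using this
    refine ⟨LWalk.cons e0 P', ?_, ?_⟩
    · rw [LWalk.weight_cons, hw', Fin.sum_univ_succ (f := ws)]
      rfl
    · rw [LWalk.support_cons, hs', List.ofFn_succ (f := c), h0]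
      rfl

def LReach (E : V → V → ℕ → Prop) (u v : V) : Prop := ∃ P : LWalk E u v, P.IsP

theorem reachableW_iff_lreach : ReachableW E u v ↔ LReach E u v := by
  constructor
  · rintro ⟨p, c, ws, ⟨hinj, h0, hl, he⟩⟩
    obtain ⟨P, _, hs⟩ := LWalk.ofFin c ws he h0 hl
    refine ⟨P, ?_⟩
    rw [LWalk.IsP, hs]
    exact (List.nodup_ofFn).2 hinj
  · rintro ⟨P, hP⟩
    obtain ⟨p, c, ws, h0, hl, he, _, hofn⟩ := P.toFin
    rw [LWalk.IsP, ← hofn] at hP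
    exact ⟨p, c, ws, (List.nodup_ofFn).1 hP, h0, hl, he⟩

theorem evenReach_iff_lreach :
    EvenReach E u v ↔ ∃ P : LWalk E u v, P.IsP ∧ Even P.weight := by
  constructor
  · rintro ⟨p, c, ws, ⟨hinj, h0, hl, he⟩, hev⟩
    obtain ⟨P, hw, hs⟩ := LWalk.ofFin c ws he h0 hl
    refine ⟨P, ?_, by rw [hw]; exact hev⟩
    rw [LWalk.IsP, hs]
    exact (List.nodup_ofFn).2 hinj
  · rintro ⟨P, hP, hev⟩
    obtain ⟨p, c, ws, h0, hl, he, hsum, hofn⟩ := P.toFin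
    rw [LWalk.IsP, ← hofn] at hP
    exact ⟨p, c, ws, ⟨(List.nodup_ofFn).1 hP, h0, hl, he⟩, by rw [hsum]; exact hev⟩

theorem LReach.refl (E : V → V → ℕ → Prop) (u : V) : LReach E u u :=
  ⟨LWalk.nil u, LWalk.isP_nil⟩

theorem LReach.of_walk (P : LWalk E u v) : LReach E u v := by
  obtain ⟨Q, hQ, _⟩ := P.exists_path
  exact ⟨Q, hQ⟩

theorem LReach.symm (hs : ∀ a b w, E a b w → E b a w) (h : LReach E u v) :
    LReach E v u := by
  obtain ⟨P, hP⟩ := h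
  refine ⟨P.reverse hs, ?_⟩
  rw [LWalk.IsP, LWalk.support_reverse, List.nodup_reverse]
  exact hP

theorem LReach.trans {x : V} (h1 : LReach E u v) (h2 : LReach E v x) : LReach E u x := by
  obtain ⟨P, _⟩ := h1
  obtain ⟨Q, _⟩ := h2
  exact LReach.of_walk (P.append Q)

theorem LReach.mono {F : V → V → ℕ → Prop} (h : ∀ a b w, E a b w → F a b w)
    (hr : LReach E u v) : LReach F u v := by
  obtain ⟨P, hP⟩ := hr
  obtain ⟨Q, _, hs⟩ := P.exists_mono h
  exact ⟨Q, by rw [LWalk.IsP, hs]; exact hP⟩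

theorem LReach.single (e : E u v w) : LReach E u v := LReach.of_walk (.cons e (.nil v))

theorem oddClosed (e : E u v w) (P : LWalk E v u) (hP : P.IsP)
    (hodd : Odd (w + P.weight)) : HasOddWeightCycle E := by
  classical
  obtain ⟨p, c, ws, hc0, hcl, hedge, hsum, hofn⟩ := P.toFin
  rw [LWalk.IsP, ← hofn] at hP
  have hinj : Function.Injective c := (List.nodup_ofFn).1 hP
  set cc : Fin (p + 1) → V :=
    fun t => if h : (t : ℕ) = 0 then u else c ⟨(t : ℕ) - 1, by have := t.isLt; omega⟩
    with hccdef
  set ww : Fin (p + 1) → ℕ :=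
    fun t => if h : (t : ℕ) = 0 then w else ws ⟨(t : ℕ) - 1, by have := t.isLt; omega⟩
    with hwwdef
  have hcp : ∀ (h : p < p + 1), c ⟨p, h⟩ = u := by
    intro h
    rw [← hcl]
    rfl
  have hc00 : ∀ (h : 0 < p + 1), c ⟨0, h⟩ = v := by
    intro h
    rw [← hc0]
    exact congrArg c (Fin.ext (by simp))
  have hccinj : Function.Injective cc := by
    intro a b hab
    simp only [hccdef] at hab
    by_cases ha : (a : ℕ) = 0 <;> by_cases hb : (b : ℕ) = 0
    · exact Fin.ext (by first | omega | (simp only [finmk_val, Fin.val_succ, Fin.coe_castSucc]; omega))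
    · exfalso
      rw [dif_pos ha, dif_neg hb] at hab
      have hab' : c ⟨p, by omega⟩ = c ⟨(b : ℕ) - 1, by have := b.isLt; omega⟩ := by
        rw [hcp]; exact hab
      have h' := hinj hab'
      simp only [Fin.mk.injEq] at h'
      have := b.isLt
      omega
    · exfalso
      rw [dif_neg ha, dif_pos hb] at hab
      have hab' : c ⟨p, by omega⟩ = c ⟨(a : ℕ) - 1, by have := a.isLt; omega⟩ := by
        rw [hcp]; exact hab.symm
      have h' := hinj hab'
      simp only [Fin.mk.injEq] at h'
      have := a.isLt
      omega
    · rw [dif_neg ha, dif_neg hb] at hab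
      have h' := hinj hab
      simp only [Fin.mk.injEq] at h'
      exact Fin.ext (by first | omega | (simp only [finmk_val, Fin.val_succ, Fin.coe_castSucc]; omega))
  have hval : ∀ t : Fin (p + 1), ((t + 1 : Fin (p + 1)) : ℕ)
      = if (t : ℕ) = p then 0 else (t : ℕ) + 1 := by
    intro t
    rw [Fin.val_add_one]
    by_cases h : t = Fin.last p
    · rw [if_pos h, if_pos (by rw [h]; rfl)]
    · rw [if_neg h, if_neg (by intro hh; exact h (Fin.ext (by simp [hh])))]
  have hedges : ∀ t : Fin (p + 1), E (cc t) (cc (t + 1)) (ww t) := by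
    intro t
    have htlt := t.isLt
    have ht1 := hval t
    by_cases ht0 : (t : ℕ) = 0 <;> by_cases htp : (t : ℕ) = p
    · -- p = 0
      have ht10 : ((t + 1 : Fin (p + 1)) : ℕ) = 0 := by rw [ht1, if_pos htp]
      simp only [hccdef, hwwdef, dif_pos ht0, dif_pos ht10]
      have huv : v = u := (hc00 (by omega)).symm.trans
        ((congrArg c (Fin.ext (show ((⟨0, by omega⟩ : Fin (p + 1)) : ℕ) = ((⟨p, by omega⟩ : Fin (p + 1)) : ℕ) by simp only [finmk_val]; omega))).trans (hcp (by omega)))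
      exact huv ▸ e
    · -- t = 0, p ≥ 1 : edge u -> c 0
      have ht11 : ((t + 1 : Fin (p + 1)) : ℕ) = 1 := by rw [ht1, if_neg htp, ht0]
      simp only [hccdef, hwwdef, dif_pos ht0, dif_neg (show ¬((t + 1 : Fin (p + 1)) : ℕ) = 0 by omega)]
      have hx : c ⟨((t + 1 : Fin (p + 1)) : ℕ) - 1, by have := (t + 1 : Fin (p + 1)).isLt; omega⟩ = v :=
        (congrArg c (Fin.ext (by first | omega | (simp only [finmk_val, Fin.val_succ, Fin.coe_castSucc]; omega)))).trans (hc00 (by omega))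
      exact hx.symm ▸ e
    · -- t = p ≥ 1 : edge c (p-1) -> u
      have ht10 : ((t + 1 : Fin (p + 1)) : ℕ) = 0 := by rw [ht1, if_pos htp]
      simp only [hccdef, hwwdef, dif_neg ht0, dif_pos ht10]
      have he := hedge ⟨p - 1, by omega⟩
      have h1 : (⟨p - 1, by omega⟩ : Fin p).castSucc = ⟨(t : ℕ) - 1, by omega⟩ := by
        apply Fin.ext
        simp only [finmk_val, Fin.coe_castSucc]
        omega
      have h2 : (⟨p - 1, by omega⟩ : Fin p).succ = ⟨p, by omega⟩ := by
        apply Fin.ext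
        simp only [finmk_val, Fin.val_succ]
        omega
      rw [h1, h2, hcp] at he
      have h3 : (⟨(t : ℕ) - 1, by omega⟩ : Fin p) = ⟨p - 1, by omega⟩ :=
        Fin.ext (by simp only [finmk_val]; omega)
      rw [h3]
      exact he
    · -- 0 < t < p : edge c (t-1) -> c t
      have ht1' : ((t + 1 : Fin (p + 1)) : ℕ) = (t : ℕ) + 1 := by rw [ht1, if_neg htp]
      simp only [hccdef, hwwdef, dif_neg ht0, dif_neg (show ¬((t + 1 : Fin (p + 1)) : ℕ) = 0 by omega)]
      have he := hedge ⟨(t : ℕ) - 1, by omega⟩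
      have h1 : (⟨(t : ℕ) - 1, by omega⟩ : Fin p).castSucc = ⟨(t : ℕ) - 1, by omega⟩ := by
        apply Fin.ext
        simp only [finmk_val, Fin.coe_castSucc]
      have h2 : (⟨(t : ℕ) - 1, by omega⟩ : Fin p).succ
          = ⟨((t + 1 : Fin (p + 1)) : ℕ) - 1, by have := (t + 1 : Fin (p + 1)).isLt; omega⟩ := by
        apply Fin.ext
        simp only [finmk_val, Fin.val_succ]
        omega
      rw [h1, h2] at he
      exact he
  have hwsum : ∑ t, ww t = w + P.weight := by
    rw [Fin.sum_univ_succ]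
    have h0 : ww 0 = w := by simp [hwwdef]
    have hs : ∀ t : Fin p, ww t.succ = ws t := by
      intro t
      have hnz : ¬((t.succ : Fin (p + 1)) : ℕ) = 0 := by
        rw [Fin.val_succ]
        omega
      simp only [hwwdef, dif_neg hnz]
      apply congrArg
      apply Fin.ext
      simp only [finmk_val, Fin.val_succ]
      omega
    rw [h0, Finset.sum_congr rfl fun t _ => hs t, hsum]
  refine ⟨p, cc, ww, hccinj, hedges, ?_, by rw [hwsum]; exact hodd⟩
  intro a b hab
  have h1 : Sym2.mk (cc a, cc (a + 1)) = Sym2.mk (cc b, cc (b + 1)) := congrArg Prod.fst hab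
  have h2 : ww a = ww b := congrArg Prod.snd hab
  replace h1 : (cc a = cc b ∧ cc (a + 1) = cc (b + 1)) ∨ (cc a = cc (b + 1) ∧ cc (a + 1) = cc b) := by
    have h := Sym2.eq_iff.1 (congrFun h1 (cc a, cc (a + 1)))
    rcases h with ⟨h, _⟩ | ⟨_, h⟩ <;> exact Or.inl (Prod.ext_iff.1 h)
  rcases h1 with ⟨hx, _⟩ | ⟨hx, hy⟩
  · exact hccinj hx
  · have hab1 : a = b + 1 := hccinj hx
    have hab2 : a + 1 = b := hccinj hy
    have hva' : (a : ℕ) = ((b + 1 : Fin (p + 1)) : ℕ) := by rw [hab1]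
    have hvb' : (b : ℕ) = ((a + 1 : Fin (p + 1)) : ℕ) := by rw [← hab2]
    have e1 : (a : ℕ) = if (b : ℕ) = p then 0 else (b : ℕ) + 1 := by rw [hva', hval b]
    have e2 : (b : ℕ) = if (a : ℕ) = p then 0 else (a : ℕ) + 1 := by rw [hvb', hval a]
    have halt := a.isLt
    have hblt := b.isLt
    by_cases hp0 : p = 0
    · exact Fin.ext (by first | omega | (simp only [finmk_val, Fin.val_succ, Fin.coe_castSucc]; omega))
    · have hp1 : p = 1 ∧ (((a : ℕ) = 0 ∧ (b : ℕ) = 1) ∨ ((a : ℕ) = 1 ∧ (b : ℕ) = 0)) := by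
        by_cases hbp : (b : ℕ) = p
        · rw [if_pos hbp] at e1
          by_cases hap : (a : ℕ) = p
          · rw [if_pos hap] at e2; omega
          · rw [if_neg hap] at e2; omega
        · rw [if_neg hbp] at e1
          by_cases hap : (a : ℕ) = p
          · rw [if_pos hap] at e2; omega
          · rw [if_neg hap] at e2; omega
      obtain ⟨hp1, hcase⟩ := hp1
      exfalso
      have hw0 : w = ws ⟨0, by omega⟩ := by
        rcases hcase with ⟨ha0, hb1⟩ | ⟨ha1, hb0⟩
        · have hh := h2
          simp only [hwwdef, dif_pos ha0, dif_neg (show ¬(b : ℕ) = 0 by omega)] at hh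
          rw [hh]
          exact congrArg ws (Fin.ext (by first | omega | (simp only [finmk_val, Fin.val_succ, Fin.coe_castSucc]; omega)))
        · have hh := h2.symm
          simp only [hwwdef, dif_pos hb0, dif_neg (show ¬(a : ℕ) = 0 by omega)] at hh
          rw [hh]
          exact congrArg ws (Fin.ext (by first | omega | (simp only [finmk_val, Fin.val_succ, Fin.coe_castSucc]; omega)))
      have hPw : P.weight = w := by
        rw [← hsum]
        have hall : ∀ t : Fin p, ws t = w := by
          intro t
          have := t.isLt
          have ht : t = ⟨0, by omega⟩ := Fin.ext (by first | omega | (simp only [finmk_val, Fin.val_succ, Fin.coe_castSucc]; omega))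
          rw [ht, ← hw0]
        rw [Finset.sum_congr rfl fun t _ => hall t, Finset.sum_const, Finset.card_univ,
          Fintype.card_fin, hp1]
        simp
      rw [Nat.odd_iff, hPw] at hodd
      omega

end Convert

section MatrixLemmas

variable {n m : ℕ} {A : Fin n → Fin m → Fin 3}

theorem fin3_cases (x : Fin 3) : x = 0 ∨ x = 1 ∨ x = 2 := by
  fin_cases x <;> simp

@[simp] theorem boolToFin3_false : boolToFin3 false = 0 := rfl
@[simp] theorem boolToFin3_true : boolToFin3 true = 1 := rfl

theorem indA_mem1 {i j : Fin m} {x y : Bool} (r : Fin n) (h1 : A r i = boolToFin3 x)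
    (h2 : A r j = boolToFin3 y) : (x, y) ∈ indA A i j := ⟨r, Or.inl ⟨h1, h2⟩⟩

theorem indA_mem2 {i j : Fin m} {x : Bool} (y : Bool) (r : Fin n) (h1 : A r i = boolToFin3 x)
    (h2 : A r j = 2) : (x, y) ∈ indA A i j := ⟨r, Or.inr (Or.inl ⟨h1, h2⟩)⟩

theorem indA_mem3 {i j : Fin m} {y : Bool} (x : Bool) (r : Fin n) (h1 : A r i = 2)
    (h2 : A r j = boolToFin3 y) : (x, y) ∈ indA A i j := ⟨r, Or.inr (Or.inr ⟨h1, h2⟩)⟩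

theorem indA_swap {i j : Fin m} {x y : Bool} (h : (x, y) ∈ indA A i j) :
    (y, x) ∈ indA A j i := by
  obtain ⟨r, h⟩ := h
  exact ⟨r, by tauto⟩

theorem cg_iff {i j : Fin m} :
    ColGreater A i j ↔ ((false, true) ∉ indA A i j ∧ ∃ r, A r i ≠ A r j) := by
  constructor
  · rintro ⟨hsub, hw⟩
    refine ⟨fun h => ?_, hw⟩
    have := hsub h
    simp [Prod.ext_iff] at this
  · rintro ⟨h01, hw⟩
    refine ⟨?_, hw⟩
    rintro ⟨x, y⟩ hp
    rcases x <;> rcases y <;> simp [Prod.ext_iff]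
    exact h01 hp

theorem cg_irrefl (i : Fin m) : ¬ ColGreater A i i := by
  rintro ⟨_, r, hr⟩
  exact hr rfl

theorem cg_trans {i j k : Fin m} (h1 : ColGreater A i j) (h2 : ColGreater A j k) :
    ColGreater A i k := by
  rw [cg_iff] at h1 h2 ⊢
  obtain ⟨h1n, r1, h1w⟩ := h1
  obtain ⟨h2n, _⟩ := h2
  constructor
  · rintro ⟨r, hik⟩
    rcases fin3_cases (A r j) with hj | hj | hj
    · -- A r j = 0
      rcases hik with ⟨hi, hk⟩ | ⟨hi, hk⟩ | ⟨hi, hk⟩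
      · exact h2n (indA_mem1 r (by simpa using hj) (by simpa using hk))
      · exact h2n (indA_mem2 true r (by simpa using hj) hk)
      · exact h2n (indA_mem1 r (by simpa using hj) (by simpa using hk))
    · -- A r j = 1
      rcases hik with ⟨hi, hk⟩ | ⟨hi, hk⟩ | ⟨hi, hk⟩
      · exact h1n (indA_mem1 r (by simpa using hi) (by simpa using hj))
      · exact h1n (indA_mem1 r (by simpa using hi) (by simpa using hj))
      · exact h1n (indA_mem3 false r hi (by simpa using hj))
    · -- A r j = 2
      rcases hik with ⟨hi, hk⟩ | ⟨hi, hk⟩ | ⟨hi, hk⟩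
      · exact h1n (indA_mem2 true r (by simpa using hi) hj)
      · exact h1n (indA_mem2 true r (by simpa using hi) hj)
      · exact h2n (indA_mem3 false r hj (by simpa using hk))
  · by_contra hcon
    push_neg at hcon
    have hik := hcon r1
    rcases fin3_cases (A r1 i) with hi | hi | hi <;>
      rcases fin3_cases (A r1 j) with hj | hj | hj
    · exact h1w (hi.trans hj.symm)
    · exact h1n (indA_mem1 r1 (by simpa using hi) (by simpa using hj))
    · exact h1n (indA_mem2 true r1 (by simpa using hi) hj)
    · exact h2n (indA_mem1 r1 (by simpa using hj) (by rw [← hik]; simpa using hi))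
    · exact h1w (hi.trans hj.symm)
    · exact h2n (indA_mem3 false r1 hj (by rw [← hik]; simpa using hi))
    · exact h2n (indA_mem2 true r1 (by simpa using hj) (by rw [← hik]; exact hi))
    · exact h1n (indA_mem3 false r1 hi (by simpa using hj))
    · exact h1w (hi.trans hj.symm)

theorem exists_maximal_rel {α : Type*} [DecidableEq α] (R : α → α → Prop)
    (htrans : ∀ a b c, R a b → R b c → R a c) (hirr : ∀ a, ¬ R a a) :
    ∀ (s : Finset α), s.Nonempty → ∃ x ∈ s, ∀ y ∈ s, ¬ R y x := by
  classical
  intro s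
  induction s using Finset.strongInductionOn with
  | _ s ih =>
    intro hs
    obtain ⟨a, ha⟩ := hs
    by_cases hmax : ∀ y ∈ s, ¬ R y a
    · exact ⟨a, ha, hmax⟩
    · push_neg at hmax
      obtain ⟨b, hb, hRba⟩ := hmax
      have hss : s.filter (fun y => R y a) ⊂ s := by
        refine Finset.ssubset_iff_of_subset (Finset.filter_subset _ _) |>.2 ?_
        exact ⟨a, ha, fun hmem => hirr a (Finset.mem_filter.1 hmem).2⟩
      obtain ⟨x, hx, hmax'⟩ := ih _ hss ⟨b, Finset.mem_filter.2 ⟨hb, hRba⟩⟩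
      refine ⟨x, Finset.filter_subset _ _ hx, ?_⟩
      intro y hy hR
      exact hmax' y (Finset.mem_filter.2 ⟨hy, htrans _ _ _ hR (Finset.mem_filter.1 hx).2⟩) hR

theorem exists_rowSet (r : Fin n) {j0 : Fin m} (hj0 : A r j0 = 2) :
    ∃ i : Fin m, r ∈ rowSet A i := by
  classical
  set S : Finset (Fin m) := Finset.univ.filter (fun j => A r j = 2) with hS
  have hj0S : j0 ∈ S := Finset.mem_filter.2 ⟨Finset.mem_univ _, hj0⟩
  obtain ⟨x, hxS, hxmax⟩ := exists_maximal_rel (ColGreater A)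
    (fun _ _ _ => cg_trans) (fun _ => cg_irrefl _) S ⟨j0, hj0S⟩
  set T : Finset (Fin m) :=
    S.filter (fun j => ∀ k, k ≠ j → A r k = 2 → ¬ ColGreater A k j) with hT
  have hxT : x ∈ T := by
    refine Finset.mem_filter.2 ⟨hxS, fun k _ hk2 hcg => ?_⟩
    exact hxmax k (Finset.mem_filter.2 ⟨Finset.mem_univ _, hk2⟩) hcg
  set i := T.min' ⟨x, hxT⟩ with hi
  have hiT : i ∈ T := T.min'_mem _
  have hiS := (Finset.mem_filter.1 hiT).1
  refine ⟨i, (Finset.mem_filter.1 hiS).2, (Finset.mem_filter.1 hiT).2, ?_⟩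
  intro j hji ⟨hj2, hjmax⟩
  have hjT : j ∈ T := Finset.mem_filter.2
    ⟨Finset.mem_filter.2 ⟨Finset.mem_univ _, hj2⟩, fun k hk hk2 => hjmax k hk hk2⟩
  exact lt_of_le_of_ne (T.min'_le _ hjT) (fun h : i = j => hji h.symm)

theorem rowSet_unique {r : Fin n} {i i' : Fin m}
    (h1 : r ∈ rowSet A i) (h2 : r ∈ rowSet A i') : i = i' := by
  by_contra hne
  have hlt1 : i < i' := h1.2.2 i' (fun h => hne h.symm) ⟨h2.1, h2.2.1⟩
  have hlt2 : i' < i := h2.2.2 i hne ⟨h1.1, h1.2.1⟩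
  exact absurd hlt1 (not_lt.2 hlt2.le)

theorem rowSet_vert {r : Fin n} {i j : Fin m} (h : r ∈ rowSet A i) (hj : A r j = 2) :
    resVert A i j := ⟨r, h, hj⟩

end MatrixLemmas

section Parity

variable {V : Type*} {E : V → V → ℕ → Prop}

theorem LWalk.isP_reverse (hs : ∀ a b w, E a b w → E b a w) {u v : V} (P : LWalk E u v)
    (h : P.IsP) : (P.reverse hs).IsP := by
  rw [LWalk.IsP, LWalk.support_reverse, List.nodup_reverse]
  exact h

theorem isP_closed {z : V} (P : LWalk E z z) (h : P.IsP) : P.weight = 0 := by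
  cases P with
  | nil => rfl
  | cons e q =>
    exfalso
    rw [LWalk.IsP, LWalk.support_cons, List.nodup_cons] at h
    exact h.1 q.end_mem_support

theorem parity_unique (hs : ∀ a b w, E a b w → E b a w)
    (hcycE : ∀ {a b wₑ : _}, E a b wₑ → ∀ T : LWalk E b a, T.IsP → Even (wₑ + T.weight))
    {u v : V} (P Q : LWalk E u v) : P.weight % 2 = Q.weight % 2 := by
  have hev := LWalk.closed_even hcycE (P.append (Q.reverse hs))
  rw [LWalk.weight_append, LWalk.weight_reverse, Nat.even_iff] at hev
  omega

theorem even_step0 (hcycE : ∀ {a b wₑ : _}, E a b wₑ → ∀ T : LWalk E b a, T.IsP → Even (wₑ + T.weight))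
    {u k l : V} (e : E k l 0) (h : EvenReach E u k) : EvenReach E u l := by
  rw [evenReach_iff_lreach] at h ⊢
  obtain ⟨P, hP, hev⟩ := h
  obtain ⟨Q, hQ, _, hpar⟩ := (P.append (.cons e (.nil l))).exists_path_parity hcycE
  refine ⟨Q, hQ, ?_⟩
  rw [LWalk.weight_append, Nat.even_iff] at *
  simp only [LWalk.weight_cons, LWalk.weight_nil] at hpar
  omega

theorem even_step1 (hs : ∀ a b w, E a b w → E b a w)
    (hcycE : ∀ {a b wₑ : _}, E a b wₑ → ∀ T : LWalk E b a, T.IsP → Even (wₑ + T.weight))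
    {u k l : V} (e : E k l 1) (h : EvenReach E u k) : ¬ EvenReach E u l := by
  rw [evenReach_iff_lreach] at h ⊢
  obtain ⟨P, hP, hev⟩ := h
  obtain ⟨Q, hQ, _, hpar⟩ := (P.append (.cons e (.nil l))).exists_path_parity hcycE
  rintro ⟨R, hR, hevR⟩
  have := parity_unique hs hcycE Q R
  rw [LWalk.weight_append, Nat.even_iff] at *
  simp only [LWalk.weight_cons, LWalk.weight_nil] at hpar
  omega

theorem even_step1' (hs : ∀ a b w, E a b w → E b a w)
    (hcycE : ∀ {a b wₑ : _}, E a b wₑ → ∀ T : LWalk E b a, T.IsP → Even (wₑ + T.weight))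
    {u k l : V} (e : E k l 1) (hl : LReach E u l) (h : ¬ EvenReach E u l) :
    EvenReach E u k := by
  obtain ⟨P, hP⟩ := hl
  have hodd : ¬ Even P.weight := fun hev => h (evenReach_iff_lreach.2 ⟨P, hP, hev⟩)
  obtain ⟨Q, hQ, _, hpar⟩ := (P.append (.cons (hs _ _ _ e) (.nil k))).exists_path_parity hcycE
  refine evenReach_iff_lreach.2 ⟨Q, hQ, ?_⟩
  rw [Nat.even_iff] at *
  rw [LWalk.weight_append] at hpar
  simp only [LWalk.weight_cons, LWalk.weight_nil] at hpar
  omega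

end Parity

section Gprime

variable {n m : ℕ} {A : Fin n → Fin m → Fin 3} {i : Fin m}

theorem res_symm : ∀ a b w, resEdge A i a b w → resEdge A i b a w := by
  rintro a b w ⟨hne, ⟨r, hr, hk, hl⟩, hw⟩
  refine ⟨hne.symm, ⟨r, hr, hl, hk⟩, ?_⟩
  rcases hw with ⟨h0, h11 | ⟨j, hji, r2, hr2, hk2, hl2⟩⟩ | ⟨h1, hsub⟩
  · exact Or.inl ⟨h0, Or.inl (indA_swap h11)⟩
  · exact Or.inl ⟨h0, Or.inr ⟨j, hji, r2, hr2, hl2, hk2⟩⟩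
  · refine Or.inr ⟨h1, ?_⟩
    rintro ⟨x, y⟩ hp
    simp only [Set.mem_insert_iff, Set.mem_singleton_iff, Prod.mk.injEq] at hp
    rcases hp with ⟨rfl, rfl⟩ | ⟨rfl, rfl⟩
    · exact indA_swap (hsub (Set.mem_insert_iff.2 (Or.inr rfl)))
    · exact indA_swap (hsub (Set.mem_insert_iff.2 (Or.inl rfl)))

theorem vert_of_walk {k l : Fin m} (P : LWalk (resEdge A i) k l) (hk : resVert A i k) :
    resVert A i l := by
  induction P with
  | nil => exact hk
  | cons e q ih =>
    obtain ⟨r, hr, _, h2⟩ := e.2.1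
    exact ih ⟨r, hr, h2⟩

open Classical in
noncomputable def reachSet (A : Fin n → Fin m → Fin 3) (i k : Fin m) : Finset (Fin m) :=
  Finset.univ.filter (fun l => LReach (resEdge A i) k l)

theorem mem_reachSet {k l : Fin m} : l ∈ reachSet A i k ↔ LReach (resEdge A i) k l := by
  classical
  simp [reachSet, Finset.mem_filter]

noncomputable def repF (A : Fin n → Fin m → Fin 3) (i k : Fin m) : Fin m :=
  (reachSet A i k).min' ⟨k, mem_reachSet.2 (LReach.refl _ _)⟩

theorem reach_repF {k : Fin m} : LReach (resEdge A i) k (repF A i k) :=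
  mem_reachSet.1 ((reachSet A i k).min'_mem _)

theorem repF_congr {k k' : Fin m} (h : LReach (resEdge A i) k k') :
    repF A i k = repF A i k' := by
  have hset : reachSet A i k = reachSet A i k' := by
    ext l
    rw [mem_reachSet, mem_reachSet]
    exact ⟨fun hl => (LReach.symm res_symm h).trans hl, fun hl => h.trans hl⟩
  unfold repF
  congr 1

def isRepP (A : Fin n → Fin m → Fin 3) (i c : Fin m) : Prop :=
  resVert A i c ∧ ¬ LReach (resEdge A i) i c ∧ repF A i c = c

def Eext (A : Fin n → Fin m → Fin 3) (i : Fin m) (k l : Fin m) (w : ℕ) : Prop :=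
  resEdge A i k l w ∨ (w = 0 ∧ ((k = i ∧ isRepP A i l) ∨ (l = i ∧ isRepP A i k)))

theorem eext_symm : ∀ a b w, Eext A i a b w → Eext A i b a w := by
  rintro a b w (e | ⟨hw, ⟨ha, hrep⟩ | ⟨hb, hrep⟩⟩)
  · exact Or.inl (res_symm _ _ _ e)
  · exact Or.inr ⟨hw, Or.inr ⟨ha, hrep⟩⟩
  · exact Or.inr ⟨hw, Or.inl ⟨hb, hrep⟩⟩

theorem eext_conn {k : Fin m} (hk : resVert A i k) : LReach (Eext A i) i k := by
  by_cases h : LReach (resEdge A i) i k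
  · exact h.mono (fun a b w e => Or.inl e)
  · have hrk : LReach (resEdge A i) k (repF A i k) := reach_repF
    have hvc : resVert A i (repF A i k) := by
      obtain ⟨P, _⟩ := hrk
      exact vert_of_walk P hk
    have hnc : ¬ LReach (resEdge A i) i (repF A i k) :=
      fun hic => h (hic.trans (LReach.symm res_symm hrk))
    have hfix : repF A i (repF A i k) = repF A i k := (repF_congr hrk).symm
    have e0 : Eext A i i (repF A i k) 0 := Or.inr ⟨rfl, Or.inl ⟨rfl, hvc, hnc, hfix⟩⟩
    exact (LReach.single e0).trans
      ((LReach.symm res_symm hrk).mono (fun a b w e => Or.inl e))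

theorem lemA {a b : Fin m} (P : LWalk (Eext A i) a b) (hi : i ∉ P.support) :
    P.Sat (resEdge A i) := by
  apply P.sat_of_mem
  intro x y w e hx hy
  rcases e with e | ⟨_, ⟨rfl, _⟩ | ⟨rfl, _⟩⟩
  · exact e
  · exact absurd hx hi
  · exact absurd hy hi

theorem lemB {a : Fin m} (P : LWalk (Eext A i) i a) (hP : P.IsP) :
    (∃ Q : LWalk (resEdge A i) i a, Q.weight = P.weight) ∨
    (∃ c, isRepP A i c ∧ c ∈ P.support ∧ c ≠ i ∧
      ∃ Q : LWalk (resEdge A i) c a, Q.IsP ∧ Q.weight = P.weight) := by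
  cases P with
  | nil => exact Or.inl ⟨.nil i, rfl⟩
  | @cons u v0 x w0 e0 q =>
    have hnod : i ∉ q.support ∧ q.support.Nodup := by
      have h := hP
      rw [LWalk.IsP, LWalk.support_cons, List.nodup_cons] at h
      exact h
    obtain ⟨Q1, hw1, hs1⟩ := q.exists_transfer (lemA q hnod.1)
    have hQ1 : Q1.IsP := by rw [LWalk.IsP, hs1]; exact hnod.2
    rcases e0 with e0 | ⟨hw0, ⟨_, hrep⟩ | ⟨hv0, _⟩⟩
    · exact Or.inl ⟨.cons e0 Q1, by simp [hw1]; rfl⟩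
    · refine Or.inr ⟨v0, hrep, ?_, ?_, Q1, hQ1, ?_⟩
      · exact List.mem_cons_of_mem _ q.start_mem_support
      · intro h; exact hnod.1 (h ▸ q.start_mem_support)
      · simp [hw1, hw0]
    · exact absurd (hv0 ▸ q.start_mem_support) hnod.1

theorem eext_even (hodd : ¬ HasOddWeightCycle (resEdge A i)) :
    ∀ {a b : Fin m} {w : ℕ}, Eext A i a b w → ∀ (T : LWalk (Eext A i) b a), T.IsP →
      Even (w + T.weight) := by
  have hres : ∀ {a b : Fin m} {w : ℕ}, resEdge A i a b w →
      ∀ (T : LWalk (resEdge A i) b a), T.IsP → Even (w + T.weight) := by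
    intro a b w e T hT
    by_contra hev
    exact hodd (oddClosed e T hT (Nat.not_even_iff_odd.1 hev))
  intro a b w e T hT
  rcases e with e | ⟨hw0, ⟨ha, hrep⟩ | ⟨hb, hrep⟩⟩
  · by_cases hi : i ∈ T.support
    · obtain ⟨T1, T2, hsplit, hT1, hT2, hsub1, hsub2, hdisj⟩ := T.exists_split_isP hT hi
      have hB1 := lemB (T1.reverse eext_symm) (T1.isP_reverse eext_symm hT1)
      have hB2 := lemB T2 hT2
      rcases hB1 with ⟨Q1, hQ1w⟩ | ⟨c1, hrep1, hc1mem, hc1ne, Q1, hQ1P, hQ1w⟩ <;>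
        rcases hB2 with ⟨Q2, hQ2w⟩ | ⟨c2, hrep2, hc2mem, hc2ne, Q2, hQ2P, hQ2w⟩
      · have hev := LWalk.closed_even hres (LWalk.cons e ((Q1.reverse res_symm).append Q2))
        rw [LWalk.weight_reverse] at hQ1w
        rw [LWalk.weight_cons, LWalk.weight_append, LWalk.weight_reverse,
          Nat.even_iff] at hev
        rw [Nat.even_iff]
        omega
      · exfalso
        refine hrep2.2.1 ?_
        exact ((LReach.of_walk Q1).trans
          (LReach.single (res_symm _ _ _ e))).trans (LReach.symm res_symm (LReach.of_walk Q2))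
      · exfalso
        refine hrep1.2.1 ?_
        exact ((LReach.of_walk Q2).trans (LReach.single e)).trans
          (LReach.symm res_symm (LReach.of_walk Q1))
      · exfalso
        have hcc : LReach (resEdge A i) c1 c2 :=
          ((LReach.of_walk Q1).trans (LReach.single (res_symm _ _ _ e))).trans
            (LReach.symm res_symm (LReach.of_walk Q2))
        have hceq : c1 = c2 := by
          rw [← hrep1.2.2, ← hrep2.2.2]
          exact repF_congr hcc
        rw [LWalk.support_reverse, List.mem_reverse] at hc1mem
        have hc2tail : c2 ∈ T2.support.tail := by
          have := T2.support_head_tail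
          rcases List.mem_cons.1 (this ▸ hc2mem) with h | h
          · exact absurd h hc2ne
          · exact h
        exact hdisj hc1mem (hceq ▸ hc2tail)
    · obtain ⟨Q, hQw, hQs⟩ := T.exists_transfer (lemA T hi)
      have hQ : Q.IsP := by rw [LWalk.IsP, hQs]; exact hT
      have := hres e Q hQ
      rw [hQw] at this
      exact this
  · subst ha
    have hB := lemB (T.reverse eext_symm) (T.isP_reverse eext_symm hT)
    rcases hB with ⟨Q, hQw⟩ | ⟨c, hrepc, hcmem, hcne, Q, hQP, hQw⟩
    · exact absurd (LReach.of_walk Q) hrep.2.1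
    · have hbc := LReach.symm res_symm (LReach.of_walk Q)
      have hceq : b = c := by
        rw [← hrep.2.2, ← hrepc.2.2]
        exact repF_congr hbc
      subst hceq
      have h0 : Q.weight = 0 := isP_closed Q hQP
      rw [LWalk.weight_reverse] at hQw
      rw [hw0, ← hQw, h0]
      simp
  · subst hb
    have hB := lemB T hT
    rcases hB with ⟨Q, hQw⟩ | ⟨c, hrepc, hcmem, hcne, Q, hQP, hQw⟩
    · exact absurd (LReach.of_walk Q) hrep.2.1
    · have hac := LReach.symm res_symm (LReach.of_walk Q)
      have hceq : a = c := by
        rw [← hrep.2.2, ← hrepc.2.2]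
        exact repF_congr hac
      subst hceq
      have h0 : Q.weight = 0 := isP_closed Q hQP
      rw [hw0, ← hQw, h0]
      simp

end Gprime

section BDef

variable {n m : ℕ}

open Classical in
noncomputable def B1 (A : Fin n → Fin m → Fin 3) : Fin n → Fin m → Bool :=
  fun r j =>
    if A r j = 1 then true
    else if A r j = 0 then false
    else if h : ∃ i, r ∈ rowSet A i then
      (if EvenReach (Eext A (Classical.choose h)) (Classical.choose h) j then false else true)
    else false

noncomputable def B2 (A : Fin n → Fin m → Fin 3) : Fin n → Fin m → Bool :=
  fun r j => if A r j = 2 then !(B1 A r j) else B1 A r j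

variable {A : Fin n → Fin m → Fin 3}

theorem B1_0 {r : Fin n} {j : Fin m} (h : A r j = 0) : B1 A r j = false := by
  simp only [B1]
  rw [if_neg (by rw [h]; decide), if_pos h]

theorem B1_1 {r : Fin n} {j : Fin m} (h : A r j = 1) : B1 A r j = true := by
  simp only [B1]
  rw [if_pos h]

theorem B2_eq {r : Fin n} {j : Fin m} (h : A r j ≠ 2) : B2 A r j = B1 A r j := by
  simp only [B2]
  rw [if_neg h]

theorem B2_2 {r : Fin n} {j : Fin m} (h : A r j = 2) : B2 A r j = !(B1 A r j) := by
  simp only [B2]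
  rw [if_pos h]

theorem B1_2 {r : Fin n} {i j : Fin m} (hi : r ∈ rowSet A i) (hj : A r j = 2) :
    (B1 A r j = false ↔ EvenReach (Eext A i) i j) := by
  have hex : ∃ i', r ∈ rowSet A i' := ⟨i, hi⟩
  simp only [B1]
  rw [if_neg (by rw [hj]; decide), if_neg (by rw [hj]; decide), dif_pos hex]
  have heq : Classical.choose hex = i := rowSet_unique (Classical.choose_spec hex) hi
  rw [heq]
  by_cases hE : EvenReach (Eext A i) i j
  · simp [hE]
  · simp [hE]

theorem explains_B : Explains (B1 A) (B2 A) A := by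
  intro r j
  refine ⟨fun h0 => ?_, fun h1 => ?_, fun h2 => ?_⟩
  · rw [B1_0 h0, B2_eq (by rw [h0]; decide), B1_0 h0]
    exact ⟨rfl, rfl⟩
  · rw [B1_1 h1, B2_eq (by rw [h1]; decide), B1_1 h1]
    exact ⟨rfl, rfl⟩
  · rw [B2_2 h2]
    cases B1 A r j <;> decide

theorem Bval {r : Fin n} {j : Fin m} {x : Bool} (h : B1 A r j = x ∨ B2 A r j = x) :
    A r j = boolToFin3 x ∨ A r j = 2 := by
  rcases fin3_cases (A r j) with h0 | h0 | h0
  · left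
    have hb : B1 A r j = false := B1_0 h0
    have hb2 : B2 A r j = false := by rw [B2_eq (by rw [h0]; decide)]; exact hb
    have hx : x = false := by
      rcases h with h | h
      · exact h.symm.trans hb
      · exact h.symm.trans hb2
    rw [hx, h0]
    rfl
  · left
    have hb : B1 A r j = true := B1_1 h0
    have hb2 : B2 A r j = true := by rw [B2_eq (by rw [h0]; decide)]; exact hb
    have hx : x = true := by
      rcases h with h | h
      · exact h.symm.trans hb
      · exact h.symm.trans hb2
    rw [hx, h0]
    rfl
  · exact Or.inr h0

theorem bool_eq_of_iff {P : Prop} {a b : Bool} (h1 : a = false ↔ P) (h2 : b = false ↔ P) :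
    a = b := by
  by_cases hP : P
  · rw [h1.2 hP, h2.2 hP]
  · rcases Bool.eq_false_or_eq_true a with ha | ha
    · rcases Bool.eq_false_or_eq_true b with hb | hb
      · rw [ha, hb]
      · exact absurd (h2.1 hb) hP
    · exact absurd (h1.1 ha) hP

theorem bool_ne_of_iff {a b : Bool} (h : (a = false) ↔ ¬ (b = false)) : a ≠ b := by
  intro hab
  subst hab
  rcases Bool.eq_false_or_eq_true a with h' | h'
  · exact absurd (h.2 (by simp [h'])) (by simp [h'])
  · exact (h.1 h') h' 

end BDef

/-- Let `A` be an `n × m` genotype matrix such that `{01,10,11} ⊄ ind^A(i,j)` for all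
columns `i, j` and no resolution graph `G_i` contains a cycle of odd total weight.
Then there is a `2n × m` haplotype matrix `B` explaining `A` that satisfies the three
gamete property; moreover, `B` can be chosen so that, for each `i`, there is a
connected supergraph `G_i'` of `G_i` (obtained by joining one vertex of each
connected component of `G_i` not containing `i` to `i` by an edge of weight `0`)
such that for each row `g ∈ A_i` and each column `j` with `g[j] = 2`, the first
explaining haplotype `h` of `g` has `h[j] = 0` if `j` is connected to `i` by an
even-weight path in `G_i'`, and `h[j] = 1` otherwise. -/
theorem dpph_construction {n m : ℕ} (A : Fin n → Fin m → Fin 3)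
    (hind : ∀ i j : Fin m,
      ¬ (({(false, true), (true, false), (true, true)} : Set (Bool × Bool)) ⊆ indA A i j))
    (hcyc : ∀ i : Fin m, ¬ HasOddWeightCycle (resEdge A i)) :
    ∃ (B₁ B₂ : Fin n → Fin m → Bool) (E' : Fin m → (Fin m → Fin m → ℕ → Prop)),
      Explains B₁ B₂ A ∧ ThreeGamete B₁ B₂ ∧
      -- each G_i' is a supergraph of G_i
      (∀ i k l w, resEdge A i k l w → E' i k l w) ∧
      -- each G_i' is symmetric
      (∀ i k l w, E' i k l w → E' i l k w) ∧
      -- the added edges have weight 0 and join i to a vertex of a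
      -- connected component of G_i not containing i
      (∀ i k l w, E' i k l w → resEdge A i k l w ∨
        (w = 0 ∧ ((k = i ∧ resVert A i l ∧ ¬ ReachableW (resEdge A i) i l) ∨
                  (l = i ∧ resVert A i k ∧ ¬ ReachableW (resEdge A i) i k)))) ∧
      -- only one vertex per connected component of G_i is joined to i
      (∀ i k l, k ≠ l →
        (E' i i k 0 ∧ ¬ resEdge A i i k 0) → (E' i i l 0 ∧ ¬ resEdge A i i l 0) →
        ¬ ReachableW (resEdge A i) k l) ∧
      -- each G_i' is connected (every vertex of G_i is joined to i)
      (∀ i k, resVert A i k → ReachableW (E' i) i k) ∧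
      -- the haplotypes are determined by parities of path weights in G_i'
      (∀ i : Fin m, ∀ r ∈ rowSet A i, ∀ j : Fin m, A r j = 2 →
        (B₁ r j = false ↔ EvenReach (E' i) i j)) := by
  classical
  have hE : ∀ i : Fin m, ∀ {a b : Fin m} {w : ℕ}, Eext A i a b w →
      ∀ (T : LWalk (Eext A i) b a), T.IsP → Even (w + T.weight) :=
    fun i => eext_even (hcyc i)
  have EC0 : ∀ (i : Fin m) (r : Fin n) (k l : Fin m), resEdge A i k l 0 →
      r ∈ rowSet A i → A r k = 2 → A r l = 2 → B1 A r k = B1 A r l := by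
    intro i r k l e hi hk hl
    have e' : Eext A i k l 0 := Or.inl e
    have hiff : EvenReach (Eext A i) i k ↔ EvenReach (Eext A i) i l :=
      ⟨even_step0 (hE i) e', even_step0 (hE i) (eext_symm _ _ _ e')⟩
    exact bool_eq_of_iff (B1_2 hi hk) ((B1_2 hi hl).trans hiff.symm)
  have EC1 : ∀ (i : Fin m) (r : Fin n) (k l : Fin m), resEdge A i k l 1 →
      r ∈ rowSet A i → A r k = 2 → A r l = 2 → B1 A r k ≠ B1 A r l := by
    intro i r k l e hi hk hl
    have e' : Eext A i k l 1 := Or.inl e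
    have hreachl : LReach (Eext A i) i l := eext_conn (rowSet_vert hi hl)
    have hiff : EvenReach (Eext A i) i k ↔ ¬ EvenReach (Eext A i) i l :=
      ⟨even_step1 eext_symm (hE i) e',
       fun hnl => even_step1' eext_symm (hE i) e' hreachl hnl⟩
    apply bool_ne_of_iff
    exact (B1_2 hi hk).trans (hiff.trans (not_congr (B1_2 hi hl)).symm)
  have CLS : ∀ {k l : Fin m} {x y : Bool}, (x, y) ∈ indB (B1 A) (B2 A) k l →
      (x, y) ∈ indA A k l ∨ ∃ r i, r ∈ rowSet A i ∧ A r k = 2 ∧ A r l = 2 ∧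
        ((x ≠ y) ↔ (B1 A r k ≠ B1 A r l)) := by
    intro k l x y hmem
    obtain ⟨r, hc⟩ := hmem
    have hxk : B1 A r k = x ∨ B2 A r k = x := by
      rcases hc with ⟨h, _⟩ | ⟨h, _⟩
      · exact Or.inl h
      · exact Or.inr h
    have hyl : B1 A r l = y ∨ B2 A r l = y := by
      rcases hc with ⟨_, h⟩ | ⟨_, h⟩
      · exact Or.inl h
      · exact Or.inr h
    rcases Bval hxk with hk | hk <;> rcases Bval hyl with hl | hl
    · exact Or.inl (indA_mem1 r hk hl)
    · exact Or.inl (indA_mem2 y r hk hl)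
    · exact Or.inl (indA_mem3 x r hk hl)
    · obtain ⟨i, hi⟩ := exists_rowSet r hk
      refine Or.inr ⟨r, i, hi, hk, hl, ?_⟩
      rcases hc with ⟨hx, hy⟩ | ⟨hx, hy⟩
      · have hx' : B1 A r k = x := hx
        have hy' : B1 A r l = y := hy
        rw [← hx', ← hy']
      · have hx' : B2 A r k = x := hx
        have hy' : B2 A r l = y := hy
        rw [← hx', ← hy', B2_2 hk, B2_2 hl]
        simp
  have hTG : ThreeGamete (B1 A) (B2 A) := by
    intro k l hsub
    have h01 := hsub (show ((false, true) : Bool × Bool) ∈ _ by simp)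
    have h10 := hsub (show ((true, false) : Bool × Bool) ∈ _ by simp)
    have h11 := hsub (show ((true, true) : Bool × Bool) ∈ _ by simp)
    by_cases hkl : k = l
    · subst hkl
      obtain ⟨r, hc⟩ := h01
      rcases hc with ⟨h1, h2⟩ | ⟨h1, h2⟩ <;> exact absurd (h1.symm.trans h2) (by decide)
    · rcases CLS h11 with h11A | ⟨r, i, hi, hk2, hl2, hxy⟩
      · have hD : ∃ r i, r ∈ rowSet A i ∧ A r k = 2 ∧ A r l = 2 ∧
            B1 A r k ≠ B1 A r l := by
          rcases CLS h01 with hA | ⟨r, i, hi, hk2, hl2, hxy⟩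
          · rcases CLS h10 with hA' | ⟨r, i, hi, hk2, hl2, hxy⟩
            · exfalso
              refine hind k l ?_
              intro p hp
              simp only [Set.mem_insert_iff, Set.mem_singleton_iff] at hp
              rcases hp with rfl | rfl | rfl
              exacts [hA, hA', h11A]
            · exact ⟨r, i, hi, hk2, hl2, hxy.1 (by decide)⟩
          · exact ⟨r, i, hi, hk2, hl2, hxy.1 (by decide)⟩
        obtain ⟨r, i, hi, hk2, hl2, hne⟩ := hD
        have e0 : resEdge A i k l 0 := ⟨hkl, ⟨r, hi, hk2, hl2⟩, Or.inl ⟨rfl, Or.inl h11A⟩⟩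
        exact hne (EC0 i r k l e0 hi hk2 hl2)
      · have hEq : B1 A r k = B1 A r l := by
          by_contra hne
          exact (by decide : ¬ ((true : Bool) ≠ true)) (hxy.2 hne)
        have contraD : ∀ r' i', r' ∈ rowSet A i' → A r' k = 2 → A r' l = 2 →
            B1 A r' k ≠ B1 A r' l → False := by
          intro r' i' hi' hk2' hl2' hne'
          by_cases hii : i' = i
          · subst hii
            have e1 := bool_eq_of_iff (B1_2 hi' hk2') (B1_2 hi hk2)
            have e2 := bool_eq_of_iff (B1_2 hi' hl2') (B1_2 hi hl2)
            rw [e1, e2] at hne'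
            exact hne' hEq
          · have e0 : resEdge A i' k l 0 :=
              ⟨hkl, ⟨r', hi', hk2', hl2'⟩,
                Or.inl ⟨rfl, Or.inr ⟨i, fun h => hii h.symm, r, hi, hk2, hl2⟩⟩⟩
            exact hne' (EC0 i' r' k l e0 hi' hk2' hl2')
        rcases CLS h01 with h01A | ⟨r', i', hi', hk2', hl2', hxy'⟩
        · rcases CLS h10 with h10A | ⟨r', i', hi', hk2', hl2', hxy'⟩
          · have hsub01 : ({(false, true), (true, false)} : Set (Bool × Bool)) ⊆
                indA A k l := by
              intro p hp
              simp only [Set.mem_insert_iff, Set.mem_singleton_iff] at hp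
              rcases hp with rfl | rfl
              exacts [h01A, h10A]
            have e1 : resEdge A i k l 1 :=
              ⟨hkl, ⟨r, hi, hk2, hl2⟩, Or.inr ⟨rfl, hsub01⟩⟩
            exact (EC1 i r k l e1 hi hk2 hl2) hEq
          · exact contraD r' i' hi' hk2' hl2' (hxy'.1 (by decide))
        · exact contraD r' i' hi' hk2' hl2' (hxy'.1 (by decide))
  refine ⟨B1 A, B2 A, fun i => Eext A i, explains_B, hTG, ?_, ?_, ?_, ?_, ?_, ?_⟩
  · exact fun i k l w e => Or.inl e
  · exact fun i k l w e => eext_symm k l w e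
  · rintro i k l w (e | ⟨hw, ⟨hk, hrep⟩ | ⟨hl, hrep⟩⟩)
    · exact Or.inl e
    · exact Or.inr ⟨hw, Or.inl ⟨hk, hrep.1,
        fun hR => hrep.2.1 (reachableW_iff_lreach.1 hR)⟩⟩
    · exact Or.inr ⟨hw, Or.inr ⟨hl, hrep.1,
        fun hR => hrep.2.1 (reachableW_iff_lreach.1 hR)⟩⟩
  · intro i k l hkl h1 h2
    have hrepk : isRepP A i k := by
      rcases h1.1 with e | ⟨_, ⟨_, hrep⟩ | ⟨hki, hrep⟩⟩
      · exact absurd e h1.2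
      · exact hrep
      · exact absurd (LReach.refl _ _) hrep.2.1
    have hrepl : isRepP A i l := by
      rcases h2.1 with e | ⟨_, ⟨_, hrep⟩ | ⟨hli, hrep⟩⟩
      · exact absurd e h2.2
      · exact hrep
      · exact absurd (LReach.refl _ _) hrep.2.1
    intro hR
    refine hkl ?_
    rw [← hrepk.2.2, ← hrepl.2.2]
    exact repF_congr (reachableW_iff_lreach.1 hR)
  · intro i k hv
    exact reachableW_iff_lreach.2 (eext_conn hv)
  · intro i r hr j hj
    exact B1_2 hr hj
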